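/- Let f and e be as in the definition of the H^{-1} energy density. For any a ∈ dom(∂f) with a > 0, the set equality { f*(b) : b ∈ ∂f(a) } = ∂e(a) holds, where f* is the convex conjugate of f and ∂ denotes the subdifferential. -/

import Mathlib

open Filter Set Topology MeasureTheory

noncomputable section
open scoped Classical

/-- Convexity for extended-real-valued functions on `ℝ`. -/
def EConvex (f : ℝ → EReal) : Prop :=
  ∀ x y t : ℝ, 0 ≤ t → t ≤ 1 →
    f (t * x + (1 - t) * y) ≤ (t : EReal) * f x + ((1 - t : ℝ) : EReal) * f y

/-- Legendre–Fenchel (convex) conjugate: `f*(b) = sup_a (a·b − f(a))`. -/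
def econj (f : ℝ → EReal) (b : ℝ) : EReal := ⨆ a : ℝ, ((a * b : ℝ) : EReal) - f a

/-- Subdifferential of an extended-real-valued function:
`∂g(x) = { p : p(y − x) + g(x) ≤ g(y) for all y }`. -/
def esubdiff (g : ℝ → EReal) (x : ℝ) : Set ℝ :=
  {p : ℝ | ∀ y : ℝ, ((p * (y - x) : ℝ) : EReal) + g x ≤ g y}

/-- The `H^{-1}` energy density associated to `f`:
`e(a) = a·f(a) − 2∫₀ᵃ f(s) ds` for `a ∈ dom f`, `+∞` otherwise. -/
def eDen (f : ℝ → EReal) (a : ℝ) : EReal :=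
  if f a = ⊤ then ⊤
  else ((a * (f a).toReal - 2 * ∫ s in (0 : ℝ)..a, (f s).toReal : ℝ) : EReal)

set_option maxHeartbeats 1600000

/-- For every `a ∈ dom(∂f)` with `a > 0`, one has
`{ f*(b) : b ∈ ∂f(a) } = ∂e(a)` for the `H^{-1}` energy density `e`. -/
theorem statement6 (f : ℝ → EReal) (hconv : EConvex f)
    (hlsc : LowerSemicontinuous f) (hf0 : f 0 = 0)
    (hneg : ∀ a : ℝ, a < 0 → f a = ⊤)
    (hdom : (interior {a : ℝ | f a ≠ ⊤}).Nonempty)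
    (a : ℝ) (ha : 0 < a) (hsub : (esubdiff f a).Nonempty) :
    {x : ℝ | ∃ b ∈ esubdiff f a, econj f b = (x : EReal)} = esubdiff (eDen f) a := by
  classical
  obtain ⟨q, hqmem⟩ := hsub
  have hq : ∀ y : ℝ, ((q * (y - a) : ℝ) : EReal) + f a ≤ f y := hqmem
  obtain ⟨y₀, hy₀i⟩ := hdom
  have hy₀ : f y₀ ≠ ⊤ := interior_subset hy₀i
  have ha' : a ≠ 0 := ne_of_gt ha
  -- `f` never takes the value `⊥`
  have hbot : ∀ s : ℝ, f s ≠ ⊥ := by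
    intro s hs
    have hs0 : 0 ≤ s := by
      by_contra h
      rw [hneg s (lt_of_not_ge h)] at hs
      exact (top_ne_bot) hs
    have hspos : 0 < s := by
      rcases hs0.lt_or_eq with h | h
      · exact h
      · rw [← h, hf0] at hs
        exact absurd hs (by simp)
    have hkey : ∀ t : ℝ, 0 < t → t < 1 → f (t * s) = ⊥ := by
      intro t ht0 ht1
      have h := hconv s 0 t ht0.le ht1.le
      rw [hf0, hs] at h
      simp only [mul_zero, add_zero, EReal.coe_mul_bot_of_pos ht0] at h
      exact le_bot_iff.1 h
    have hev : ∀ᶠ z in 𝓝 (0 : ℝ), (⊥ : EReal) < f z := by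
      apply hlsc 0 ⊥
      rw [hf0]
      simp
    obtain ⟨ε, hε, hball⟩ := Metric.eventually_nhds_iff.1 hev
    set t : ℝ := min (1 / 2) (ε / (2 * s)) with htdef
    have ht0 : 0 < t := lt_min (by norm_num) (div_pos hε (by linarith))
    have ht1 : t < 1 := lt_of_le_of_lt (min_le_left _ _) (by norm_num)
    have hts : t * s ≤ ε / 2 := by
      have h1 : t ≤ ε / (2 * s) := min_le_right _ _
      have h2 : (ε / (2 * s)) * s = ε / 2 := by field_simp
      nlinarith [mul_le_mul_of_nonneg_right h1 hspos.le]
    have hdist : dist (t * s) (0 : ℝ) < ε := by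
      rw [Real.dist_eq, sub_zero, abs_of_nonneg (mul_nonneg ht0.le hspos.le)]
      linarith
    have := hball hdist
    rw [hkey t ht0 ht1] at this
    exact lt_irrefl _ this
  -- `f a` is finite
  have hfa : f a ≠ ⊤ := by
    intro h
    have h2 := hq y₀
    rw [h, EReal.add_top_of_ne_bot (EReal.coe_ne_bot _)] at h2
    exact hy₀ (top_le_iff.1 h2)
  set F : ℝ → ℝ := fun s => (f s).toReal with hFdef
  have hcoe : ∀ s : ℝ, f s ≠ ⊤ → f s = ((F s : ℝ) : EReal) := fun s hs =>
    (EReal.coe_toReal hs (hbot s)).symm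
  have hnn : ∀ s : ℝ, f s ≠ ⊤ → 0 ≤ s := by
    intro s hs
    by_contra h
    exact hs (hneg s (not_le.1 h))
  have h0D : f 0 ≠ ⊤ := by rw [hf0]; simp
  -- real-valued chord inequality
  have hchord : ∀ x y t : ℝ, f x ≠ ⊤ → f y ≠ ⊤ → 0 ≤ t → t ≤ 1 →
      f (t * x + (1 - t) * y) ≠ ⊤ ∧ F (t * x + (1 - t) * y) ≤ t * F x + (1 - t) * F y := by
    intro x y t hx hy ht0 ht1
    have h := hconv x y t ht0 ht1
    rw [hcoe x hx, hcoe y hy, ← EReal.coe_mul, ← EReal.coe_mul, ← EReal.coe_add] at h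
    refine ⟨ne_top_of_le_ne_top (EReal.coe_ne_top _) h, ?_⟩
    have h2 := EReal.toReal_le_toReal h (hbot _) (EReal.coe_ne_top _)
    rwa [EReal.toReal_coe] at h2
  -- the (finiteness) domain contains segments
  have hDIcc : ∀ c d : ℝ, c ≤ d → f c ≠ ⊤ → f d ≠ ⊤ → ∀ t ∈ Icc c d, f t ≠ ⊤ := by
    intro c d hcd hc hd t ht
    obtain ⟨h1, h2⟩ := ht
    rcases eq_or_lt_of_le hcd with rfl | hlt
    · have h3 : t = c := le_antisymm h2 h1
      rwa [h3]
    · have hdc : d - c ≠ 0 := sub_ne_zero.2 (ne_of_gt hlt)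
      set tt := (d - t) / (d - c) with htt
      have h0 : 0 ≤ tt := div_nonneg (by linarith) (by linarith)
      have h1' : tt ≤ 1 := by rw [div_le_one (by linarith)]; linarith
      have hpt : tt * c + (1 - tt) * d = t := by rw [htt]; field_simp; ring
      have h3 := (hchord c d tt hc hd h0 h1').1
      rwa [hpt] at h3
  -- real subgradient inequality
  have hsubR : ∀ r : ℝ, (∀ y : ℝ, ((r * (y - a) : ℝ) : EReal) + f a ≤ f y) →
      ∀ t : ℝ, f t ≠ ⊤ → r * (t - a) + F a ≤ F t := by
    intro r hr t ht
    have h := hr t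
    rw [hcoe a hfa, hcoe t ht, ← EReal.coe_add] at h
    exact_mod_cast h
  have hmeas : Measurable F := (hlsc.measurable).ereal_toReal
  -- boundedness on segments of the domain
  have hM : ∀ c d : ℝ, c ≤ d → f c ≠ ⊤ → f d ≠ ⊤ → ∀ t ∈ Icc c d,
      |F t| ≤ |F c| + |F d| + |F a| + |q| * (|c| + |d| + |a|) := by
    intro c d hcd hc hd t ht
    obtain ⟨h1, h2⟩ := ht
    have hft : f t ≠ ⊤ := hDIcc c d hcd hc hd t ⟨h1, h2⟩
    have hlow : q * (t - a) + F a ≤ F t := hsubR q hq t hft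
    have hup : F t ≤ |F c| + |F d| := by
      rcases eq_or_lt_of_le hcd with rfl | hlt
      · have h3 : t = c := le_antisymm h2 h1
        rw [h3]
        nlinarith [le_abs_self (F c), abs_nonneg (F c)]
      · have hdc : d - c ≠ 0 := sub_ne_zero.2 (ne_of_gt hlt)
        set tt := (d - t) / (d - c) with htt
        have h0 : 0 ≤ tt := div_nonneg (by linarith) (by linarith)
        have h1' : tt ≤ 1 := by rw [div_le_one (by linarith)]; linarith
        have hpt : tt * c + (1 - tt) * d = t := by rw [htt]; field_simp; ring
        have h3 := (hchord c d tt hc hd h0 h1').2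
        rw [hpt] at h3
        nlinarith [le_abs_self (F c), le_abs_self (F d), abs_nonneg (F c), abs_nonneg (F d)]
    have htabs : |t - a| ≤ |c| + |d| + |a| := by
      rw [abs_le]
      constructor
      · nlinarith [neg_abs_le c, le_abs_self d, abs_nonneg d, abs_nonneg c, neg_abs_le a,
          le_abs_self a]
      · nlinarith [le_abs_self d, abs_nonneg c, le_abs_self a, neg_abs_le a]
    have hqt : q * (t - a) ≥ -(|q| * (|c| + |d| + |a|)) := by
      have h4 : |q * (t - a)| ≤ |q| * (|c| + |d| + |a|) := by
        rw [abs_mul]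
        exact mul_le_mul_of_nonneg_left htabs (abs_nonneg q)
      linarith [neg_abs_le (q * (t - a)), abs_le.1 h4]
    rw [abs_le]
    constructor
    · nlinarith [abs_nonneg (F c), abs_nonneg (F d), neg_abs_le (F a)]
    · nlinarith [abs_nonneg (F a), mul_nonneg (abs_nonneg q)
        (by positivity : (0:ℝ) ≤ |c| + |d| + |a|)]
  -- interval integrability on segments of the domain
  have hint : ∀ c d : ℝ, f c ≠ ⊤ → f d ≠ ⊤ → IntervalIntegrable F volume c d := by
    have key : ∀ c d : ℝ, c ≤ d → f c ≠ ⊤ → f d ≠ ⊤ → IntervalIntegrable F volume c d := by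
      intro c d hcd hc hd
      rw [intervalIntegrable_iff]
      apply Measure.integrableOn_of_bounded (M := |F c| + |F d| + |F a| + |q| * (|c| + |d| + |a|))
      · rw [Set.uIoc_of_le hcd]
        exact (measure_Ioc_lt_top).ne
      · exact hmeas.aestronglyMeasurable
      · rw [Set.uIoc_of_le hcd]
        refine (ae_restrict_iff' measurableSet_Ioc).2 (ae_of_all _ fun t ht => ?_)
        rw [Real.norm_eq_abs]
        exact hM c d hcd hc hd t (Ioc_subset_Icc_self ht)
    intro c d hc hd
    rcases le_total c d with h | h
    · exact key c d h hc hd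
    · exact (key d c h hd hc).symm
  -- integral of an affine function
  have hlin : ∀ u v c d : ℝ,
      (∫ t in c..d, (u + v * t)) = u * (d - c) + v * ((d ^ 2 - c ^ 2) / 2) := by
    intro u v c d
    rw [intervalIntegral.integral_add intervalIntegrable_const
      (intervalIntegral.intervalIntegrable_id.const_mul v),
      intervalIntegral.integral_const_mul, integral_id, intervalIntegral.integral_const]
    simp [smul_eq_mul]
    ring
  -- chord bound on integrals
  have hchordInt : ∀ c d : ℝ, c < d → f c ≠ ⊤ → f d ≠ ⊤ →
      (∫ t in c..d, F t) ≤ (d - c) * (F c + F d) / 2 := by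
    intro c d hcd hc hd
    have hdc : d - c ≠ 0 := sub_ne_zero.2 (ne_of_gt hcd)
    set v := (F d - F c) / (d - c) with hv
    set u := F c - v * c with hu
    have hmono : ∀ t ∈ Icc c d, F t ≤ u + v * t := by
      intro t ht
      obtain ⟨h1, h2⟩ := ht
      set tt := (d - t) / (d - c) with htt
      have h0 : 0 ≤ tt := div_nonneg (by linarith) (by linarith)
      have h1' : tt ≤ 1 := by rw [div_le_one (by linarith)]; linarith
      have hpt : tt * c + (1 - tt) * d = t := by rw [htt]; field_simp; ring
      have h3 := (hchord c d tt hc hd h0 h1').2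
      rw [hpt] at h3
      have h4 : tt * F c + (1 - tt) * F d = u + v * t := by
        rw [hu, hv, htt]; field_simp; ring
      linarith
    have h5 := intervalIntegral.integral_mono_on hcd.le (hint c d hc hd)
      (intervalIntegrable_const.add (intervalIntegral.intervalIntegrable_id.const_mul v)) hmono
    rw [hlin u v c d] at h5
    have h6 : u * (d - c) + v * ((d ^ 2 - c ^ 2) / 2) = (d - c) * (F c + F d) / 2 := by
      rw [hu, hv]; field_simp; ring
    linarith
  -- tangent bound on integrals
  have htanInt : ∀ r c d : ℝ, (∀ y : ℝ, ((r * (y - a) : ℝ) : EReal) + f a ≤ f y) → c < d →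
      f c ≠ ⊤ → f d ≠ ⊤ →
      (F a - r * a) * (d - c) + r * ((d ^ 2 - c ^ 2) / 2) ≤ ∫ t in c..d, F t := by
    intro r c d hr hcd hc hd
    have hmono : ∀ t ∈ Icc c d, (F a - r * a) + r * t ≤ F t := by
      intro t ht
      have hft := hDIcc c d hcd.le hc hd t ht
      have h2 := hsubR r hr t hft
      nlinarith [h2]
    have h5 := intervalIntegral.integral_mono_on hcd.le
      (intervalIntegrable_const.add (intervalIntegral.intervalIntegrable_id.const_mul r))
      (hint c d hc hd) hmono
    rw [hlin (F a - r * a) r c d] at h5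
    linarith
  have heval : ∀ c : ℝ, f c ≠ ⊤ →
      eDen f c = ((c * F c - 2 * ∫ s in (0:ℝ)..c, F s : ℝ) : EReal) := by
    intro c hc
    rw [eDen, if_neg hc]
  -- reduction lemma for membership in ∂e(a)
  have hred : ∀ P y : ℝ, f y ≠ ⊤ →
      2 * (∫ t in a..y, F t) ≤ y * F y - a * F a - P * (y - a) →
      ((P * (y - a) : ℝ) : EReal) + eDen f a ≤ eDen f y := by
    intro P y hy hle
    rw [heval a hfa, heval y hy, ← EReal.coe_add, EReal.coe_le_coe_iff]
    have hsplit := intervalIntegral.integral_add_adjacent_intervals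
      (hint 0 a h0D hfa) (hint a y hfa hy)
    linarith
  -- converse estimate from membership in ∂e(a)
  have hestim : ∀ p : ℝ, (∀ z : ℝ, ((p * (z - a) : ℝ) : EReal) + eDen f a ≤ eDen f z) →
      ∀ z : ℝ, f z ≠ ⊤ → p * (z - a) ≤ z * F z - a * F a - 2 * ∫ t in a..z, F t := by
    intro p hp z hz
    have h := hp z
    rw [heval a hfa, heval z hz, ← EReal.coe_add, EReal.coe_le_coe_iff] at h
    have hsplit := intervalIntegral.integral_add_adjacent_intervals
      (hint 0 a h0D hfa) (hint a z hfa hz)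
    linarith
  -- Fenchel equality
  have key2 : ∀ b : ℝ, b ∈ esubdiff f a → econj f b = ((a * b - F a : ℝ) : EReal) := by
    intro b hbmem
    have hb : ∀ y : ℝ, ((b * (y - a) : ℝ) : EReal) + f a ≤ f y := hbmem
    apply le_antisymm
    · apply iSup_le
      intro t
      by_cases ht : f t = ⊤
      · rw [ht, EReal.sub_top]; exact bot_le
      · rw [hcoe t ht, ← EReal.coe_sub, EReal.coe_le_coe_iff]
        have h2 := hsubR b hb t ht
        nlinarith [h2]
    · have h3 : ((a * b - F a : ℝ) : EReal) = ((a * b : ℝ) : EReal) - f a := by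
        rw [hcoe a hfa, ← EReal.coe_sub]
      rw [h3]
      exact le_iSup (fun t : ℝ => ((t * b : ℝ) : EReal) - f t) a
  -- forward inclusion computation
  have key1 : ∀ b : ℝ, b ∈ esubdiff f a → (a * b - F a) ∈ esubdiff (eDen f) a := by
    intro b hbmem
    have hb : ∀ y : ℝ, ((b * (y - a) : ℝ) : EReal) + f a ≤ f y := hbmem
    intro y
    by_cases hy : f y = ⊤
    · rw [show eDen f y = ⊤ from if_pos hy]
      exact le_top
    · apply hred _ y hy
      have hy0 : 0 ≤ y := hnn y hy
      have hsg := hsubR b hb y hy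
      rcases lt_trichotomy a y with h | h | h
      · have hc := hchordInt a y h hfa hy
        nlinarith [mul_nonneg ha.le (by linarith : (0:ℝ) ≤ F y - (F a + b * (y - a)))]
      · subst h
        rw [intervalIntegral.integral_same]
        nlinarith [sq_nonneg (0:ℝ)]
      · have ht := htanInt b y a hb h hy hfa
        have hsymm : (∫ t in a..y, F t) = -∫ t in y..a, F t :=
          intervalIntegral.integral_symm y a
        nlinarith [mul_nonneg hy0 (by linarith : (0:ℝ) ≤ F y - (F a + b * (y - a)))]
  -- backward inclusion computation
  have key3 : ∀ p : ℝ, p ∈ esubdiff (eDen f) a → (p + F a) / a ∈ esubdiff f a := by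
    intro p hpmem
    have hp : ∀ z : ℝ, ((p * (z - a) : ℝ) : EReal) + eDen f a ≤ eDen f z := hpmem
    set b := (p + F a) / a with hbdef
    have hba : a * b = p + F a := by rw [hbdef]; field_simp
    intro y
    by_cases hy : f y = ⊤
    · rw [hy]; exact le_top
    · rw [hcoe a hfa, hcoe y hy, ← EReal.coe_add, EReal.coe_le_coe_iff]
      by_contra hcon
      push_neg at hcon
      have hy0 : 0 ≤ y := hnn y hy
      rcases lt_trichotomy y a with h | h | h
      · -- y < a : direct chord contradiction
        have hest := hestim p hp y hy
        have hc := hchordInt y a h hy hfa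
        have hsymm : (∫ t in a..y, F t) = -∫ t in y..a, F t :=
          intervalIntegral.integral_symm y a
        nlinarith [mul_pos ha (by linarith : (0:ℝ) < b * (y - a) + F a - F y)]
      · rw [h] at hcon
        simp at hcon
      · -- a < y : approach from the right
        have hya : 0 < y - a := by linarith
        have hya' : y - a ≠ 0 := ne_of_gt hya
        set s := (F y - F a) / (y - a) with hs
        have hsb : s < b := by
          rw [hs, div_lt_iff₀ hya]; nlinarith [hcon]
        have hqs : q ≤ s := by
          have h2 := hsubR q hq y hy
          rw [hs, le_div_iff₀ hya]; nlinarith [h2]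
        have hK0 : 0 ≤ s - q := by linarith
        set ε := a * (b - s) with hε
        have hε0 : 0 < ε := by rw [hε]; apply mul_pos ha; linarith
        set h' := min (y - a) (ε / (s - q + 1)) with hh
        have hh0 : 0 < h' := lt_min hya (div_pos hε0 (by linarith))
        have hhy : h' ≤ y - a := min_le_left _ _
        have hKh : (s - q) * h' < ε := by
          have h1 : h' ≤ ε / (s - q + 1) := min_le_right _ _
          have h2 : (s - q) * (ε / (s - q + 1)) < ε := by
            rw [mul_comm, div_mul_eq_mul_div, div_lt_iff₀ (by linarith : (0:ℝ) < s - q + 1)]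
            nlinarith
          nlinarith [mul_le_mul_of_nonneg_left h1 hK0]
        have hfz : f (a + h') ≠ ⊤ :=
          hDIcc a y (by linarith) hfa hy (a + h') ⟨by linarith, by linarith⟩
        -- chord bound at a + h'
        have hchz : F (a + h') ≤ F a + s * h' := by
          set tt := (y - (a + h')) / (y - a) with htt
          have h0 : 0 ≤ tt := div_nonneg (by linarith) (by linarith)
          have h1' : tt ≤ 1 := by rw [div_le_one hya]; linarith
          have hpt : tt * a + (1 - tt) * y = a + h' := by rw [htt]; field_simp; ring
          have h3 := (hchord a y tt hfa hy h0 h1').2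
          rw [hpt] at h3
          have he : tt * F a + (1 - tt) * F y = F a + s * h' := by
            rw [htt, hs]; field_simp; ring
          linarith
        have htan := htanInt q a (a + h') hq (by linarith) hfa hfz
        have hest := hestim p hp (a + h') hfz
        have hba' : p = a * b - F a := by linarith
        rw [hba'] at hest
        have hfin : a * b - a * s ≤ (s - q) * h' := by
          nlinarith [hest, htan, hchz, hh0,
            mul_le_mul_of_nonneg_left hchz (by linarith : (0:ℝ) ≤ a + h')]
        rw [hε] at hKh
        linarith
  -- conclusion
  ext x
  simp only [Set.mem_setOf_eq]
  constructor
  · rintro ⟨b, hb, hxb⟩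
    have h2 := key2 b hb
    rw [hxb] at h2
    have hx : x = a * b - F a := by exact_mod_cast h2
    rw [hx]
    exact key1 b hb
  · intro hp
    refine ⟨(x + F a) / a, key3 x hp, ?_⟩
    rw [key2 _ (key3 x hp)]
    have hxa : a * ((x + F a) / a) - F a = x := by field_simp; ring
    rw [hxa]
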